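/- For n ≥ 2, T_n ≥ binomial(2n-1,n)/n, and T_n ≤ binomial(2n-1,n)/n + binomial(2·⌊n/2⌋ − 1, ⌊n/2⌋)·n/n, so T_n / (4^n/(2√(πn)·n)) → 1 as n → ∞. -/

import Mathlib

open Finset Filter Topology

noncomputable section

/-- number of size-`k` submultisets of `{0,…,n-1}` whose sum is ≡ 0 mod `n` -/
def symCount (n k : ℕ) : ℕ :=
  Nat.card {s : Sym (Fin n) k // ((s : Multiset (Fin n)).map Fin.val).sum % n = 0}

/-- `T n`: number of size-`n` submultisets of `{0,…,n-1}` summing to `0` mod `n`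
(= number of rooted unlabelled cyclically distinct plane trees with `n` edges). -/
def planeTreeT (n : ℕ) : ℕ := symCount n n

/-- Walkup's formula expression `(1/n) ∑_{d ∣ n} C(2d-1, d) φ(n/d)` (exact division). -/
def walkupT (n : ℕ) : ℕ :=
  (∑ d ∈ n.divisors, Nat.choose (2 * d - 1) d * Nat.totient (n / d)) / n

/-- number of up-steps strictly before position `i` in a monotone lattice path
encoded by `f : Fin m → Bool` (`true` = up-step, `false` = right-step). -/
def upsBefore {m : ℕ} (f : Fin m → Bool) (i : Fin m) : ℕ :=
  Nat.card {j : Fin m // j < i ∧ f j = true}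

/-- area below/right of a monotone lattice path: sum over right-steps of the
number of up-steps before them. -/
def pathArea {m : ℕ} (f : Fin m → Bool) : ℕ :=
  ∑ i : Fin m, if f i = false then upsBefore f i else 0

/-- number of up-steps of a monotone lattice path. -/
def upCount {m : ℕ} (f : Fin m → Bool) : ℕ := Nat.card {i : Fin m // f i = true}

/-- the `m`-th increment (`±1`) of a walk of length `2n` encoded by
`ε : Fin (2n) → Bool` (`true` = `+1`); `0` out of range. -/
def stepVal (n : ℕ) (ε : Fin (2 * n) → Bool) (m : ℕ) : ℤ :=
  if h : m < 2 * n then (if ε ⟨m, h⟩ then 1 else -1) else 0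

/-- position of the walk after `k` steps. -/
def wpos (n : ℕ) (ε : Fin (2 * n) → Bool) (k : ℕ) : ℤ :=
  ∑ i ∈ Finset.range k, stepVal n ε i

/-- a walk of length `2n` is a bridge if it returns to `0`. -/
def IsBridge (n : ℕ) (ε : Fin (2 * n) → Bool) : Prop := wpos n ε (2 * n) = 0

/-- partial diamond area `σ_{2k} = (1/2) ∑_{i=1}^k B_{2i}` (the division is exact). -/
def psig (n : ℕ) (ε : Fin (2 * n) → Bool) (k : ℕ) : ℤ :=
  (∑ i ∈ Finset.range k, wpos n ε (2 * (i + 1))) / 2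

/-- diamond area `σ(B) = (1/2) ∑_{i=1}^n B_{2i}`. -/
def dsigma (n : ℕ) (ε : Fin (2 * n) → Bool) : ℤ := psig n ε n

/-- a bridge is graphical if `σ(B) = 0` and `σ_{2k} ≥ 0` for all `1 ≤ k < n`. -/
def IsGraphical (n : ℕ) (ε : Fin (2 * n) → Bool) : Prop :=
  IsBridge n ε ∧ dsigma n ε = 0 ∧ ∀ k, 1 ≤ k → k < n → 0 ≤ psig n ε k

/-- `B_n`: the number of graphical bridges of length `2n`. -/
def graphicalCount (n : ℕ) : ℕ := Nat.card {ε : Fin (2 * n) → Bool // IsGraphical n ε}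


-- 2 * C(2d-1, d) = centralBinom d for d ≥ 1
lemma two_mul_choose_pred {d : ℕ} (hd : 1 ≤ d) :
    2 * Nat.choose (2 * d - 1) d = Nat.centralBinom d := by
  obtain ⟨m, rfl⟩ := Nat.exists_eq_add_of_le hd
  have h1 : 2 * (1 + m) - 1 = m + (m + 1) := by omega
  rw [Nat.centralBinom, h1]
  have h2 : 2 * (1 + m) = (m + (m + 1)) + 1 := by omega
  rw [h2, show (1 + m) = m + 1 from by omega, Nat.choose_succ_succ' (m + (m+1)) m]
  rw [Nat.choose_symm_add]
  have : (m + (m + 1)).choose (m + 1) = (m + (m + 1)).choose m := by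
    rw [Nat.choose_symm_add, Nat.add_comm m (m+1), Nat.choose_symm_add]
  omega

lemma centralBinom_mono : Monotone Nat.centralBinom := by
  apply monotone_nat_of_le_succ
  intro n
  have h := Nat.succ_mul_centralBinom_succ n
  have h2 : (n + 1) * Nat.centralBinom n ≤ (n + 1) * Nat.centralBinom (n + 1) := by
    rw [h]; nlinarith [Nat.centralBinom_pos n]
  exact Nat.le_of_mul_le_mul_left h2 (Nat.succ_pos n)

lemma choose_pred_mono {d e : ℕ} (hd : 1 ≤ d) (h : d ≤ e) :
    Nat.choose (2 * d - 1) d ≤ Nat.choose (2 * e - 1) e := by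
  have he : 1 ≤ e := hd.trans h
  have := centralBinom_mono h
  have h1 := two_mul_choose_pred hd
  have h2 := two_mul_choose_pred he
  omega

lemma one_le_choose_pred {d : ℕ} : 1 ≤ Nat.choose (2 * d - 1) d := by
  rcases Nat.eq_zero_or_pos d with rfl | hd
  · simp
  · exact Nat.choose_pos (by omega)

lemma choose_pred_le_two_pow {n : ℕ} (hn : 2 ≤ n) :
    Nat.choose (2 * (n / 2) - 1) (n / 2) ≤ 2 ^ n := by
  obtain ⟨m, hm⟩ : ∃ m, n / 2 = m + 1 := ⟨n / 2 - 1, by omega⟩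
  rw [hm]
  have h1 : 2 * (m + 1) - 1 = 2 * m + 1 := by omega
  rw [h1]
  have hsym : (2 * m + 1).choose (m + 1) = (2 * m + 1).choose m := by
    have := Nat.choose_symm (show m + 1 ≤ 2 * m + 1 by omega)
    simpa [show 2 * m + 1 - (m + 1) = m from by omega] using this.symm
  calc (2 * m + 1).choose (m + 1) = (2 * m + 1).choose m := hsym
    _ ≤ 4 ^ m := Nat.choose_middle_le_pow m
    _ = 2 ^ (2 * m) := by rw [pow_mul]; norm_num
    _ ≤ 2 ^ n := Nat.pow_le_pow_right (by norm_num) (by omega)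


lemma erase_totient_sum {n : ℕ} (hn : 2 ≤ n) :
    ∑ d ∈ n.divisors.erase n, Nat.totient (n / d) = n - 1 := by
  have hmem : n ∈ n.divisors := Nat.mem_divisors_self n (by omega)
  have h := Finset.sum_erase_add n.divisors (fun d => Nat.totient (n / d)) hmem
  have h2 : ∑ d ∈ n.divisors, Nat.totient (n / d) = n := by
    rw [Nat.sum_div_divisors]; exact Nat.sum_totient n
  simp only [Nat.div_self (show 0 < n by omega), Nat.totient_one] at h
  omega

lemma divisor_le_half {n d : ℕ} (hn : 2 ≤ n) (hd : d ∈ n.divisors.erase n) : 1 ≤ d ∧ d ≤ n / 2 := by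
  obtain ⟨hne, hdvd⟩ := Finset.mem_erase.mp hd
  obtain ⟨hdvd, hn0⟩ := Nat.mem_divisors.mp hdvd
  obtain ⟨k, hk⟩ := hdvd
  have hd1 : 1 ≤ d := by
    rcases Nat.eq_zero_or_pos d with rfl | h; · simp at hk; omega
    · exact h
  have hk2 : 2 ≤ k := by
    rcases Nat.lt_or_ge k 2 with h | h
    · interval_cases k <;> omega
    · exact h
  refine ⟨hd1, ?_⟩
  rw [Nat.le_div_iff_mul_le (by norm_num)]
  nlinarith

lemma sum_bounds {n : ℕ} (hn : 2 ≤ n) :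
    Nat.choose (2 * n - 1) n + (n - 1) ≤
      (∑ d ∈ n.divisors, Nat.choose (2 * d - 1) d * Nat.totient (n / d)) ∧
    (∑ d ∈ n.divisors, Nat.choose (2 * d - 1) d * Nat.totient (n / d)) ≤
      Nat.choose (2 * n - 1) n + Nat.choose (2 * (n / 2) - 1) (n / 2) * (n - 1) := by
  have hmem : n ∈ n.divisors := Nat.mem_divisors_self n (by omega)
  have h := Finset.sum_erase_add n.divisors
    (fun d => Nat.choose (2 * d - 1) d * Nat.totient (n / d)) hmem
  simp only [Nat.div_self (show 0 < n by omega), Nat.totient_one, mul_one] at h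
  have htot := erase_totient_sum hn
  constructor
  · have hlow : ∑ d ∈ n.divisors.erase n, Nat.totient (n / d) ≤
        ∑ d ∈ n.divisors.erase n, Nat.choose (2 * d - 1) d * Nat.totient (n / d) := by
      apply Finset.sum_le_sum
      intro d _
      calc Nat.totient (n / d) = 1 * Nat.totient (n / d) := (one_mul _).symm
        _ ≤ Nat.choose (2 * d - 1) d * Nat.totient (n / d) :=
            Nat.mul_le_mul_right _ one_le_choose_pred
    omega
  · have hup : ∑ d ∈ n.divisors.erase n, Nat.choose (2 * d - 1) d * Nat.totient (n / d) ≤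
        Nat.choose (2 * (n / 2) - 1) (n / 2) * (n - 1) := by
      rw [← htot, Finset.mul_sum]
      apply Finset.sum_le_sum
      intro d hd
      obtain ⟨h1, h2⟩ := divisor_le_half hn hd
      exact Nat.mul_le_mul_right _ (choose_pred_mono h1 h2)
    omega

lemma walkup_nat_bounds {n : ℕ} (hn : 2 ≤ n) :
    Nat.choose (2 * n - 1) n ≤ n * walkupT n ∧
    n * walkupT n ≤ Nat.choose (2 * n - 1) n + Nat.choose (2 * (n / 2) - 1) (n / 2) * n := by
  obtain ⟨hl, hu⟩ := sum_bounds hn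
  set S := ∑ d ∈ n.divisors, Nat.choose (2 * d - 1) d * Nat.totient (n / d) with hS
  have hdm := Nat.div_add_mod S n
  have hmod : S % n < n := Nat.mod_lt _ (by omega)
  have : n * walkupT n = n * (S / n) := rfl
  have hCh : Nat.choose (2 * (n / 2) - 1) (n / 2) * (n - 1) ≤
      Nat.choose (2 * (n / 2) - 1) (n / 2) * n := Nat.mul_le_mul_left _ (by omega)
  constructor
  · omega
  · omega

lemma part1 {n : ℕ} (hn : 2 ≤ n) :
    (Nat.choose (2 * n - 1) n : ℝ) / n ≤ (walkupT n : ℝ) ∧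
      (walkupT n : ℝ) ≤ (Nat.choose (2 * n - 1) n : ℝ) / n +
        (Nat.choose (2 * (n / 2) - 1) (n / 2) : ℝ) * n / n := by
  have hn0 : (0:ℝ) < n := by exact_mod_cast (show 0 < n by omega)
  obtain ⟨hl, hu⟩ := walkup_nat_bounds hn
  have hl' : (Nat.choose (2 * n - 1) n : ℝ) ≤ n * walkupT n := by exact_mod_cast hl
  have hu' : (n : ℝ) * walkupT n ≤ (Nat.choose (2 * n - 1) n : ℝ) +
      (Nat.choose (2 * (n / 2) - 1) (n / 2) : ℝ) * n := by exact_mod_cast hu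
  constructor
  · rw [div_le_iff₀ hn0]; linarith
  · rw [← add_div, le_div_iff₀ hn0]
    linarith

lemma cb_st {n : ℕ} (hn : 1 ≤ n) :
    (Nat.centralBinom n : ℝ) * Real.sqrt (Real.pi * n) / 4 ^ n
      = Real.sqrt Real.pi * Stirling.stirlingSeq (2 * n) / Stirling.stirlingSeq n ^ 2 := by
  have hn0 : (0:ℝ) < n := by exact_mod_cast hn
  have hsn : (0:ℝ) < Real.sqrt n := Real.sqrt_pos.mpr hn0
  have he : (0:ℝ) < Real.exp 1 := Real.exp_pos 1
  have hfac : (0:ℝ) < (Nat.factorial n : ℝ) := by exact_mod_cast n.factorial_pos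
  set P : ℝ := ((n:ℝ) / Real.exp 1) ^ n with hPdef
  have hP : 0 < P := by positivity
  have hcb : (Nat.centralBinom n : ℝ) =
      (Nat.factorial (2*n) : ℝ) / ((Nat.factorial n : ℝ) * (Nat.factorial n : ℝ)) := by
    rw [Nat.centralBinom, Nat.cast_choose ℝ (by omega : n ≤ 2 * n),
      show 2 * n - n = n from by omega]
  have hpow : ((2 * (n:ℝ)) / Real.exp 1) ^ (2 * n) = 4 ^ n * P ^ 2 := by
    have h1 : ((2 * (n:ℝ)) / Real.exp 1) ^ (2 * n)
        = (2:ℝ) ^ (2 * n) * ((n:ℝ) / Real.exp 1) ^ (2 * n) := by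
      rw [mul_div_assoc, mul_pow]
    rw [h1, hPdef, ← pow_mul, mul_comm n 2, pow_mul]
    norm_num
  have h2n : Real.sqrt (2 * (2 * (n:ℝ))) = 2 * Real.sqrt n := by
    rw [show (2 : ℝ) * (2 * n) = (2 * Real.sqrt n)^2 by
      rw [mul_pow, Real.sq_sqrt hn0.le]; ring]
    exact Real.sqrt_sq (by positivity)
  have hst2 : Stirling.stirlingSeq (2 * n) =
      (Nat.factorial (2 * n) : ℝ) / (2 * Real.sqrt n * (4 ^ n * P ^ 2)) := by
    rw [Stirling.stirlingSeq]
    push_cast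
    rw [h2n, hpow]
  have hstn : Stirling.stirlingSeq n ^ 2 =
      (Nat.factorial n : ℝ) ^ 2 / (2 * Real.sqrt n ^ 2 * P ^ 2) := by
    rw [Stirling.stirlingSeq, div_pow, mul_pow, hPdef,
      Real.sq_sqrt (by positivity : (0:ℝ) ≤ 2 * (n:ℝ)), Real.sq_sqrt hn0.le]
  have hpin : Real.sqrt (Real.pi * n) = Real.sqrt Real.pi * Real.sqrt n :=
    Real.sqrt_mul Real.pi_pos.le n
  rw [hcb, hpin, hst2, hstn]
  have h4 : (0:ℝ) < 4 ^ n := by positivity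
  field_simp

lemma cb_tendsto :
    Filter.Tendsto (fun n : ℕ => (Nat.centralBinom n : ℝ) * Real.sqrt (Real.pi * n) / 4 ^ n)
      Filter.atTop (nhds 1) := by
  have hst := Stirling.tendsto_stirlingSeq_sqrt_pi
  have h2 : Filter.Tendsto (fun n : ℕ => Stirling.stirlingSeq (2 * n)) Filter.atTop
      (nhds (Real.sqrt Real.pi)) :=
    hst.comp (tendsto_atTop_mono (fun n => by show n ≤ 2 * n; omega) tendsto_id)
  have hpi : (0:ℝ) < Real.sqrt Real.pi := Real.sqrt_pos.mpr Real.pi_pos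
  have ht : Filter.Tendsto
      (fun n : ℕ => Real.sqrt Real.pi * Stirling.stirlingSeq (2*n) / Stirling.stirlingSeq n ^ 2)
      Filter.atTop (nhds (Real.sqrt Real.pi * Real.sqrt Real.pi / Real.sqrt Real.pi ^ 2)) :=
    (tendsto_const_nhds.mul h2).div (hst.pow 2) (by positivity)
  have heq : Real.sqrt Real.pi * Real.sqrt Real.pi / Real.sqrt Real.pi ^ 2 = 1 := by
    rw [sq]; exact div_self (by positivity)
  rw [heq] at ht
  apply ht.congr'
  filter_upwards [Filter.eventually_ge_atTop 1] with n hn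
  exact (cb_st hn).symm

lemma q_bounds {n : ℕ} (hn : 2 ≤ n) :
    (Nat.centralBinom n : ℝ) * Real.sqrt (Real.pi * n) / 4 ^ n ≤
      (walkupT n : ℝ) / ((4:ℝ)^n / (2 * Real.sqrt (Real.pi * n) * n)) ∧
    (walkupT n : ℝ) / ((4:ℝ)^n / (2 * Real.sqrt (Real.pi * n) * n)) ≤
      (Nat.centralBinom n : ℝ) * Real.sqrt (Real.pi * n) / 4 ^ n + 4 * (n:ℝ)^2 * (1/2:ℝ)^n := by
  have hn0 : (0:ℝ) < n := by exact_mod_cast (show 0 < n by omega)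
  have hn1 : (1:ℝ) ≤ n := by exact_mod_cast (show 1 ≤ n by omega)
  have hs : (0:ℝ) < Real.sqrt (Real.pi * n) := Real.sqrt_pos.mpr (by positivity)
  have h4 : (0:ℝ) < 4 ^ n := by positivity
  obtain ⟨hl, hu⟩ := walkup_nat_bounds hn
  have hl' : (Nat.choose (2 * n - 1) n : ℝ) ≤ n * walkupT n := by exact_mod_cast hl
  have hu' : (n : ℝ) * walkupT n ≤ (Nat.choose (2 * n - 1) n : ℝ) +
      (Nat.choose (2 * (n / 2) - 1) (n / 2) : ℝ) * n := by exact_mod_cast hu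
  have hcb : (Nat.centralBinom n : ℝ) = 2 * (Nat.choose (2 * n - 1) n : ℝ) := by
    exact_mod_cast (two_mul_choose_pred (by omega : 1 ≤ n)).symm
  have hCh2 : (Nat.choose (2 * (n / 2) - 1) (n / 2) : ℝ) ≤ 2 ^ n := by
    exact_mod_cast choose_pred_le_two_pow hn
  set s : ℝ := Real.sqrt (Real.pi * n) with hsdef
  set w : ℝ := (walkupT n : ℝ) with hwdef
  set C : ℝ := (Nat.choose (2 * n - 1) n : ℝ) with hCdef
  set Ch : ℝ := (Nat.choose (2 * (n / 2) - 1) (n / 2) : ℝ) with hChdef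
  have hCh0 : 0 ≤ Ch := by rw [hChdef]; positivity
  have hQ : w / ((4:ℝ)^n / (2 * s * n)) = w * (2 * s * n) / 4 ^ n := by
    rw [div_div_eq_mul_div]
  have hs2n : s ≤ 2 * n := by
    rw [hsdef, show (2:ℝ) * n = Real.sqrt ((2*n)^2) from (Real.sqrt_sq (by positivity)).symm]
    apply Real.sqrt_le_sqrt
    nlinarith [Real.pi_le_four]
  constructor
  · rw [hQ, hcb]
    gcongr ?_ / _
    nlinarith [mul_nonneg (sub_nonneg.mpr hl') hs.le]
  · rw [hQ]
    have step1 : w * (2 * s * n) / 4 ^ n ≤ (2 * C * s + 2 * s * Ch * n) / 4 ^ n := by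
      gcongr ?_ / _
      nlinarith [mul_nonneg (sub_nonneg.mpr hu') hs.le]
    have hhalf : (2:ℝ)^n / 4^n = (1/2:ℝ)^n := by
      rw [← div_pow]; norm_num
    have key : 2 * s * Ch * n ≤ 4 * (n:ℝ)^2 * 2^n := by
      have k1 : 2 * s * Ch * n ≤ 2 * (2*n) * Ch * n := by
        nlinarith [mul_nonneg (sub_nonneg.mpr hs2n) (mul_nonneg hCh0 hn0.le)]
      have k2 : 2 * (2*(n:ℝ)) * Ch * n ≤ 4 * (n:ℝ)^2 * 2^n := by
        nlinarith [mul_nonneg (sub_nonneg.mpr hCh2) (mul_nonneg hn0.le hn0.le)]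
      exact k1.trans k2
    have step2 : (2 * s * Ch * n) / 4 ^ n ≤ 4 * (n:ℝ)^2 * (1/2:ℝ)^n := by
      calc (2 * s * Ch * n) / 4 ^ n ≤ (4 * (n:ℝ)^2 * 2^n) / 4 ^ n := by gcongr ?_ / _
        _ = 4 * (n:ℝ)^2 * (1/2:ℝ)^n := by rw [mul_div_assoc, hhalf]
    calc w * (2 * s * n) / 4 ^ n ≤ (2 * C * s + 2 * s * Ch * n) / 4 ^ n := step1
      _ = (2 * C * s) / 4^n + (2 * s * Ch * n) / 4^n := by rw [add_div]
      _ ≤ (2 * C * s) / 4^n + 4 * (n:ℝ)^2 * (1/2:ℝ)^n := by linarith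
      _ = (Nat.centralBinom n : ℝ) * s / 4 ^ n + 4 * (n:ℝ)^2 * (1/2:ℝ)^n := by rw [hcb]


theorem treeT_bounds_and_asymptotics :
    (∀ n : ℕ, 2 ≤ n →
      (Nat.choose (2 * n - 1) n : ℝ) / n ≤ (walkupT n : ℝ) ∧
      (walkupT n : ℝ) ≤ (Nat.choose (2 * n - 1) n : ℝ) / n +
        (Nat.choose (2 * (n / 2) - 1) (n / 2) : ℝ) * n / n) ∧
    Tendsto (fun n : ℕ =>
        (walkupT n : ℝ) / ((4 : ℝ) ^ n / (2 * Real.sqrt (Real.pi * n) * n)))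
      atTop (nhds 1) := by
  constructor
  · exact fun n hn => part1 hn
  · have h0 : Filter.Tendsto (fun n : ℕ => 4 * (n:ℝ)^2 * (1/2:ℝ)^n) Filter.atTop (nhds 0) := by
      have := (tendsto_pow_const_mul_const_pow_of_lt_one 2
        (by norm_num : (0:ℝ) ≤ 1/2) (by norm_num : (1/2:ℝ) < 1)).const_mul (4:ℝ)
      simpa [mul_assoc] using this
    have hup := cb_tendsto.add h0
    rw [add_zero] at hup
    apply tendsto_of_tendsto_of_tendsto_of_le_of_le' cb_tendsto hup
    · filter_upwards [Filter.eventually_ge_atTop 2] with n hn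
      exact (q_bounds hn).1
    · filter_upwards [Filter.eventually_ge_atTop 2] with n hn
      exact (q_bounds hn).2
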